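/- The boundaries of two tubes forming a single intersection meet in at most four points: if tube T₁ and tube T₂ are convex quadrilaterals (convex hulls of vertical segments in general position) such that exactly one defining vertical segment of T₁ intersects T₂ and no defining segment of T₂ intersects T₁, then ∂T₁ ∩ ∂T₂ has at most four points. -/

import Mathlib

open Set

/-- A vertical segment in the plane: {x} × [a,b]. -/
def VSeg (x a b : ℝ) : Set (ℝ × ℝ) := {x} ×ˢ Set.Icc a b

def Tub (s t α β γ δ : ℝ) : Set (ℝ × ℝ) :=
  {p | s ≤ p.1 ∧ p.1 ≤ t ∧ (t - p.1) * α + (p.1 - s) * γ ≤ (t - s) * p.2 ∧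
      (t - s) * p.2 ≤ (t - p.1) * β + (p.1 - s) * δ}

lemma mem_VSeg {x a b : ℝ} {p : ℝ × ℝ} : p ∈ VSeg x a b ↔ p.1 = x ∧ a ≤ p.2 ∧ p.2 ≤ b := by
  rw [VSeg, Set.mem_prod, Set.mem_singleton_iff, Set.mem_Icc]

lemma Tub_convex (s t α β γ δ : ℝ) : Convex ℝ (Tub s t α β γ δ) := by
  intro p hp q hq u v hu hv huv
  obtain ⟨hp1, hp2, hp3, hp4⟩ := hp
  obtain ⟨hq1, hq2, hq3, hq4⟩ := hq
  have hu' : u = 1 - v := by linarith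
  subst hu'
  simp only [Tub, Set.mem_setOf_eq, Prod.fst_add, Prod.snd_add, Prod.smul_fst, Prod.smul_snd,
    smul_eq_mul]
  have k3p := mul_le_mul_of_nonneg_left hp3 hu
  have k3q := mul_le_mul_of_nonneg_left hq3 hv
  have k4p := mul_le_mul_of_nonneg_left hp4 hu
  have k4q := mul_le_mul_of_nonneg_left hq4 hv
  refine ⟨?_, ?_, ?_, ?_⟩
  · nlinarith
  · nlinarith
  · nlinarith
  · nlinarith

lemma vert_convex (c : ℝ) : Convex ℝ {p : ℝ × ℝ | p.1 = c} := by
  intro p hp q hq u v hu hv huv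
  simp only [Set.mem_setOf_eq, Prod.fst_add, Prod.smul_fst, smul_eq_mul] at *
  rw [hp, hq, ← add_mul, huv, one_mul]

lemma graph_convex (s t α γ : ℝ) :
    Convex ℝ {p : ℝ × ℝ | (t - s) * p.2 = (t - p.1) * α + (p.1 - s) * γ} := by
  intro p hp q hq u v hu hv huv
  simp only [Set.mem_setOf_eq, Prod.fst_add, Prod.snd_add, Prod.smul_fst, Prod.smul_snd,
    smul_eq_mul] at *
  linear_combination u * hp + v * hq + (t * α - s * γ) * huv

lemma Tub_closed (s t α β γ δ : ℝ) : IsClosed (Tub s t α β γ δ) := by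
  have : Tub s t α β γ δ = {p : ℝ × ℝ | s ≤ p.1} ∩ ({p : ℝ × ℝ | p.1 ≤ t} ∩
      ({p : ℝ × ℝ | (t - p.1) * α + (p.1 - s) * γ ≤ (t - s) * p.2} ∩
       {p : ℝ × ℝ | (t - s) * p.2 ≤ (t - p.1) * β + (p.1 - s) * δ})) := by
    ext p; simp [Tub, and_assoc]
  rw [this]
  refine (isClosed_le (by fun_prop) (by fun_prop)).inter ((isClosed_le (by fun_prop) (by fun_prop)).inter
    ((isClosed_le (by fun_prop) (by fun_prop)).inter (isClosed_le (by fun_prop) (by fun_prop))))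

/-- Points near p in a given direction fail some closed condition ⇒ p not interior. -/
lemma not_interior_of_dir {X : Set (ℝ × ℝ)} {p : ℝ × ℝ} (v : ℝ × ℝ)
    (h : ∀ ε : ℝ, 0 < ε → ε ≤ 1 → p + ε • v ∉ X) : p ∉ interior X := by
  intro hint
  rw [mem_interior_iff_mem_nhds, Metric.mem_nhds_iff] at hint
  obtain ⟨ε, hε, hball⟩ := hint
  have hv : (0:ℝ) < ε / (2 * (1 + ‖v‖)) := by positivity
  set c : ℝ := min 1 (ε / (2 * (1 + ‖v‖))) with hc
  have hc0 : 0 < c := lt_min one_pos hv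
  have hc1 : c ≤ 1 := min_le_left _ _
  refine h c hc0 hc1 (hball ?_)
  have : dist (p + c • v) p = c * ‖v‖ := by
    rw [dist_eq_norm]
    simp [norm_smul, abs_of_pos hc0]
  rw [Metric.mem_ball, this]
  have h2 : c ≤ ε / (2 * (1 + ‖v‖)) := min_le_right _ _
  have hn : (0:ℝ) ≤ ‖v‖ := norm_nonneg v
  calc c * ‖v‖ ≤ (ε / (2 * (1 + ‖v‖))) * ‖v‖ := by nlinarith
    _ < ε := by rw [div_mul_eq_mul_div, div_lt_iff₀ (by positivity)]; nlinarith

lemma frontier_of_left {s t α β γ δ : ℝ} {p : ℝ × ℝ} (hp : p ∈ Tub s t α β γ δ)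
    (h : p.1 = s) : p ∈ frontier (Tub s t α β γ δ) := by
  rw [frontier, Set.mem_diff]
  refine ⟨subset_closure hp, not_interior_of_dir ((-1 : ℝ), 0) fun ε hε _ hmem => ?_⟩
  have := hmem.1
  simp [Prod.fst_add, Prod.smul_fst, smul_eq_mul] at this
  rw [h] at this  -- s ≤ s + ε * (-1)
  linarith

lemma frontier_of_low {s t α β γ δ : ℝ} {p : ℝ × ℝ} (hst : s < t) (hp : p ∈ Tub s t α β γ δ)
    (h : (t - s) * p.2 = (t - p.1) * α + (p.1 - s) * γ) : p ∈ frontier (Tub s t α β γ δ) := by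
  rw [frontier, Set.mem_diff]
  refine ⟨subset_closure hp, not_interior_of_dir ((0 : ℝ), -1) fun ε hε _ hmem => ?_⟩
  have h3 := hmem.2.2.1
  simp only [Prod.fst_add, Prod.snd_add, Prod.smul_fst, Prod.smul_snd, smul_eq_mul,
    mul_zero, mul_neg, mul_one, add_zero] at h3
  nlinarith [h3, h]

lemma frontier_of_up {s t α β γ δ : ℝ} {p : ℝ × ℝ} (hst : s < t) (hp : p ∈ Tub s t α β γ δ)
    (h : (t - s) * p.2 = (t - p.1) * β + (p.1 - s) * δ) : p ∈ frontier (Tub s t α β γ δ) := by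
  rw [frontier, Set.mem_diff]
  refine ⟨subset_closure hp, not_interior_of_dir ((0 : ℝ), 1) fun ε hε _ hmem => ?_⟩
  have h4 := hmem.2.2.2
  simp only [Prod.fst_add, Prod.snd_add, Prod.smul_fst, Prod.smul_snd, smul_eq_mul,
    mul_zero, mul_one, add_zero] at h4
  nlinarith [h4, h]

lemma frontier_sub {s t α β γ δ : ℝ} {p : ℝ × ℝ} (hp : p ∈ frontier (Tub s t α β γ δ)) :
    p ∈ Tub s t α β γ δ ∧ (p.1 = s ∨ p.1 = t ∨
      (t - s) * p.2 = (t - p.1) * α + (p.1 - s) * γ ∨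
      (t - s) * p.2 = (t - p.1) * β + (p.1 - s) * δ) := by
  have hpT : p ∈ Tub s t α β γ δ := by
    have := frontier_subset_closure hp
    rwa [(Tub_closed s t α β γ δ).closure_eq] at this
  refine ⟨hpT, ?_⟩
  by_contra hcon
  push_neg at hcon
  obtain ⟨n1, n2, n3, n4⟩ := hcon
  obtain ⟨h1, h2, h3, h4⟩ := hpT
  have hint : p ∈ interior (Tub s t α β γ δ) := by
    have hopen : IsOpen {q : ℝ × ℝ | s < q.1 ∧ q.1 < t ∧
        (t - q.1) * α + (q.1 - s) * γ < (t - s) * q.2 ∧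
        (t - s) * q.2 < (t - q.1) * β + (q.1 - s) * δ} := by
      have : {q : ℝ × ℝ | s < q.1 ∧ q.1 < t ∧
        (t - q.1) * α + (q.1 - s) * γ < (t - s) * q.2 ∧
        (t - s) * q.2 < (t - q.1) * β + (q.1 - s) * δ} = {q : ℝ × ℝ | s < q.1} ∩ ({q : ℝ × ℝ | q.1 < t} ∩
        ({q : ℝ × ℝ | (t - q.1) * α + (q.1 - s) * γ < (t - s) * q.2} ∩
         {q : ℝ × ℝ | (t - s) * q.2 < (t - q.1) * β + (q.1 - s) * δ})) := by
        ext q; simp [and_assoc]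
      rw [this]
      refine (isOpen_lt (by fun_prop) (by fun_prop)).inter ((isOpen_lt (by fun_prop) (by fun_prop)).inter
        ((isOpen_lt (by fun_prop) (by fun_prop)).inter (isOpen_lt (by fun_prop) (by fun_prop))))
    have hss : {q : ℝ × ℝ | s < q.1 ∧ q.1 < t ∧
        (t - q.1) * α + (q.1 - s) * γ < (t - s) * q.2 ∧
        (t - s) * q.2 < (t - q.1) * β + (q.1 - s) * δ} ⊆ Tub s t α β γ δ := by
      rintro q ⟨g1, g2, g3, g4⟩; exact ⟨g1.le, g2.le, g3.le, g4.le⟩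
    exact interior_maximal hss hopen ⟨lt_of_le_of_ne h1 (Ne.symm n1), lt_of_le_of_ne h2 n2,
        lt_of_le_of_ne h3 (fun h => n3 h.symm), lt_of_le_of_ne h4 n4⟩
  rw [frontier, Set.mem_diff] at hp
  exact hp.2 hint

-- test hull_eq
lemma hull_eq {s t α β γ δ : ℝ} (hst : s < t) (h1 : α ≤ β) (h2 : γ ≤ δ)
    (hconv : Convex ℝ (Tub s t α β γ δ)) :
    convexHull ℝ (VSeg s α β ∪ VSeg t γ δ) = Tub s t α β γ δ := by
  have hts : (0:ℝ) < t - s := by linarith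
  apply le_antisymm
  · apply convexHull_min _ hconv
    rintro p (hp | hp) <;> rw [mem_VSeg] at hp <;>
      obtain ⟨hpx, hpa, hpb⟩ := hp <;> refine ⟨by linarith [hst.le, hpx.le], ?_, ?_, ?_⟩ <;>
      rw [hpx] <;> nlinarith
  · rintro p ⟨hp1, hp2, hp3, hp4⟩
    set θ : ℝ := (p.1 - s) / (t - s) with hθdef
    have hθ0 : 0 ≤ θ := div_nonneg (by linarith) hts.le
    have hθ1 : θ ≤ 1 := by
      rw [div_le_one hts]; linarith
    have hθx : (1 - θ) * s + θ * t = p.1 := by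
      have h' : θ * (t - s) = p.1 - s := by rw [hθdef]; exact div_mul_cancel₀ _ hts.ne'
      linear_combination h'
    have hlo : (1 - θ) * α + θ * γ ≤ p.2 := by
      rw [show (1 - θ) = (t - p.1)/(t - s) by field_simp [hθdef]; linear_combination -hθx, hθdef]
      rw [div_mul_eq_mul_div, div_mul_eq_mul_div, ← add_div, div_le_iff₀ hts]
      nlinarith
    have hhi : p.2 ≤ (1 - θ) * β + θ * δ := by
      rw [show (1 - θ) = (t - p.1)/(t - s) by field_simp [hθdef]; linear_combination -hθx, hθdef]
      rw [div_mul_eq_mul_div, div_mul_eq_mul_div, ← add_div, le_div_iff₀ hts]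
      nlinarith
    have hdlohi : (1 - θ) * α + θ * γ ≤ (1 - θ) * β + θ * δ := le_trans hlo hhi
    by_cases hc : (1 - θ) * α + θ * γ = (1 - θ) * β + θ * δ
    case pos =>
      -- degenerate: p.2 equals both; take μ = 0
      have hp2 : p.2 = (1 - θ) * α + θ * γ := le_antisymm (hc ▸ hhi) hlo
      have hA : ((s:ℝ), α) ∈ VSeg s α β := mem_VSeg.mpr ⟨rfl, le_refl _, h1⟩
      have hB : ((t:ℝ), γ) ∈ VSeg t γ δ := mem_VSeg.mpr ⟨rfl, le_refl _, h2⟩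
      have : p ∈ segment ℝ ((s:ℝ), α) ((t:ℝ), γ) := by
        refine ⟨1 - θ, θ, by linarith, hθ0, by ring, ?_⟩
        apply Prod.ext <;> simp [Prod.smul_fst, Prod.smul_snd, smul_eq_mul]
        · exact hθx
        · rw [hp2]
      exact segment_subset_convexHull (Set.mem_union_left _ hA) (Set.mem_union_right _ hB) this
    case neg =>
      have hlt : (1 - θ) * α + θ * γ < (1 - θ) * β + θ * δ := lt_of_le_of_ne hdlohi hc
      set μ : ℝ := (p.2 - ((1 - θ) * α + θ * γ)) / (((1 - θ) * β + θ * δ) - ((1 - θ) * α + θ * γ)) with hμdef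
      have hden : (0:ℝ) < ((1 - θ) * β + θ * δ) - ((1 - θ) * α + θ * γ) := by linarith
      have hμ0 : 0 ≤ μ := div_nonneg (by linarith) hden.le
      have hμ1 : μ ≤ 1 := by rw [div_le_one hden]; linarith
      have hμval : (1 - θ) * α + θ * γ + μ * (((1 - θ) * β + θ * δ) - ((1 - θ) * α + θ * γ)) = p.2 := by
        rw [hμdef]; field_simp; ring
      have hA : ((s:ℝ), α + μ * (β - α)) ∈ VSeg s α β := by
        rw [mem_VSeg]
        refine ⟨rfl, show α ≤ α + μ * (β - α) by nlinarith, show α + μ * (β - α) ≤ β by nlinarith⟩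
      have hB : ((t:ℝ), γ + μ * (δ - γ)) ∈ VSeg t γ δ := by
        rw [mem_VSeg]
        refine ⟨rfl, show γ ≤ γ + μ * (δ - γ) by nlinarith, show γ + μ * (δ - γ) ≤ δ by nlinarith⟩
      have : p ∈ segment ℝ ((s:ℝ), α + μ * (β - α)) ((t:ℝ), γ + μ * (δ - γ)) := by
        refine ⟨1 - θ, θ, by linarith, hθ0, by ring, ?_⟩
        apply Prod.ext <;> simp [Prod.smul_fst, Prod.smul_snd, smul_eq_mul]
        · exact hθx
        · linear_combination hμval
      exact segment_subset_convexHull (Set.mem_union_left _ hA) (Set.mem_union_right _ hB) this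

lemma seg_no_cross {u w X A B P : ℝ} (huw : u < w) (hux : u ≤ X) (hXw : X ≤ w)
    (hA : 0 < A) (hB : 0 < B) (hP : P = 0)
    (key : (X - u) * B + (w - X) * A = (w - u) * P) : False := by
  rw [hP, mul_zero] at key
  rcases eq_or_lt_of_le hux with h | h
  · rw [← h] at key; nlinarith
  · nlinarith [mul_pos (sub_pos.mpr h) hB, mul_nonneg (sub_nonneg.mpr hXw) hA.le]

lemma enc_le_one {Q S : Set (ℝ × ℝ)} (hQS : Q ⊆ S) (hS : S.Finite) (hconv : Convex ℝ Q) :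
    Q.encard ≤ 1 := by
  rw [Set.encard_le_one_iff]
  intro a b ha hb
  by_contra hne
  have hseg : segment ℝ a b ⊆ Q := hconv.segment_subset ha hb
  have hinf : (segment ℝ a b).Infinite := by
    rw [segment_eq_image_lineMap]
    exact (Set.Icc_infinite zero_lt_one).image
      ((AffineMap.lineMap_injective ℝ hne).injOn)
  exact hinf ((hS.subset hQS).subset hseg)

lemma final_count {S A B C D : Set (ℝ × ℝ)} (h : S ⊆ A ∪ B ∪ C ∪ D)
    (eA : A.encard ≤ 1) (eB : B.encard ≤ 1) (eC : C.encard ≤ 1) (eD : D.encard ≤ 1) :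
    S.encard ≤ 4 := by
  calc S.encard ≤ (A ∪ B ∪ C ∪ D).encard := Set.encard_mono h
    _ ≤ (A ∪ B ∪ C).encard + D.encard := Set.encard_union_le _ _
    _ ≤ ((A ∪ B).encard + C.encard) + D.encard := by
        gcongr; exact Set.encard_union_le _ _
    _ ≤ ((A.encard + B.encard) + C.encard) + D.encard := by
        gcongr <;> exact Set.encard_union_le _ _
    _ ≤ ((1 + 1) + 1) + 1 := by gcongr
    _ = 4 := by norm_num

lemma mul_cancel_le {c u v : ℝ} (hc : 0 < c) (h : c * u ≤ c * v) : u ≤ v :=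
  le_of_mul_le_mul_left h hc

lemma exit_choice {x₁ a₁ b₁ x₂ a₂ b₂ x₃ a₃ b₃ x₄ a₄ b₄ m : ℝ}
    (hD₁ : (0:ℝ) < x₂ - x₁) (hD₂ : (0:ℝ) < x₄ - x₃)
    (h₁ : a₁ ≤ b₁) (h₂ : a₂ ≤ b₂) (h₃ : a₃ ≤ b₃) (h₄ : a₄ ≤ b₄)
    (hm2 : m ≤ x₂) (hm4 : m ≤ x₄) (hx1m : x₁ ≤ m) (hx3m : x₃ ≤ m)
    (hc1 : (x₄ - x₃) * ((x₂ - m) * a₁ + (m - x₁) * a₂) ≤ (x₂ - x₁) * ((x₄ - m) * b₃ + (m - x₃) * b₄))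
    (hc2 : (x₂ - x₁) * ((x₄ - m) * a₃ + (m - x₃) * a₄) ≤ (x₄ - x₃) * ((x₂ - m) * b₁ + (m - x₁) * b₂)) :
    ∃ y : ℝ, (x₂ - m) * a₁ + (m - x₁) * a₂ ≤ (x₂ - x₁) * y ∧
      (x₄ - m) * a₃ + (m - x₃) * a₄ ≤ (x₄ - x₃) * y ∧
      (x₂ - x₁) * y ≤ (x₂ - m) * b₁ + (m - x₁) * b₂ ∧
      (x₄ - x₃) * y ≤ (x₄ - m) * b₃ + (m - x₃) * b₄ := by
  rcases le_total (((x₂ - m) * a₁ + (m - x₁) * a₂) / (x₂ - x₁))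
      (((x₄ - m) * a₃ + (m - x₃) * a₄) / (x₄ - x₃)) with h | h
  · refine ⟨((x₄ - m) * a₃ + (m - x₃) * a₄) / (x₄ - x₃), ?_, ?_, ?_, ?_⟩
    · have h2 := (div_le_div_iff₀ hD₁ hD₂).mp h
      rw [mul_div_assoc' (x₂ - x₁) _ (x₄ - x₃), le_div_iff₀ hD₂]
      linarith [h2]
    · rw [mul_div_assoc' (x₄ - x₃) _ (x₄ - x₃), le_div_iff₀ hD₂]; linarith
    · rw [mul_div_assoc' (x₂ - x₁) _ (x₄ - x₃), div_le_iff₀ hD₂]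
      linarith [hc2]
    · rw [mul_div_assoc' (x₄ - x₃) _ (x₄ - x₃), div_le_iff₀ hD₂]
      linarith [mul_nonneg (mul_nonneg hD₂.le (by linarith : (0:ℝ) ≤ x₄ - m)) (by linarith : (0:ℝ) ≤ b₃ - a₃),
        mul_nonneg (mul_nonneg hD₂.le (by linarith : (0:ℝ) ≤ m - x₃)) (by linarith : (0:ℝ) ≤ b₄ - a₄)]
  · refine ⟨((x₂ - m) * a₁ + (m - x₁) * a₂) / (x₂ - x₁), ?_, ?_, ?_, ?_⟩
    · rw [mul_div_assoc' (x₂ - x₁) _ (x₂ - x₁), le_div_iff₀ hD₁]; linarith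
    · have h2 := (div_le_div_iff₀ hD₂ hD₁).mp h
      rw [mul_div_assoc' (x₄ - x₃) _ (x₂ - x₁), le_div_iff₀ hD₁]
      linarith [h2]
    · rw [mul_div_assoc' (x₂ - x₁) _ (x₂ - x₁), div_le_iff₀ hD₁]
      linarith [mul_nonneg (mul_nonneg hD₁.le (by linarith : (0:ℝ) ≤ x₂ - m)) (by linarith : (0:ℝ) ≤ b₁ - a₁),
        mul_nonneg (mul_nonneg hD₁.le (by linarith : (0:ℝ) ≤ m - x₁)) (by linarith : (0:ℝ) ≤ b₂ - a₂)]
    · rw [mul_div_assoc' (x₄ - x₃) _ (x₂ - x₁), div_le_iff₀ hD₁]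
      linarith [hc1]

set_option maxHeartbeats 1000000 in
lemma core_count (x₁ a₁ b₁ x₂ a₂ b₂ x₃ a₃ b₃ x₄ a₄ b₄ : ℝ)
    (hx₁₂ : x₁ < x₂) (hx₃₄ : x₃ < x₄)
    (h₁ : a₁ ≤ b₁) (h₂ : a₂ ≤ b₂) (h₃ : a₃ ≤ b₃) (h₄ : a₄ ≤ b₄)
    (T₁ T₂ : Set (ℝ × ℝ))
    (hT₁ : T₁ = Tub x₁ x₂ a₁ b₁ a₂ b₂)
    (hT₂ : T₂ = Tub x₃ x₄ a₃ b₃ a₄ b₄)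
    (hsingle₁ : (VSeg x₁ a₁ b₁ ∩ T₂).Nonempty)
    (hsingle₂ : VSeg x₂ a₂ b₂ ∩ T₂ = ∅)
    (hsingle₃ : VSeg x₃ a₃ b₃ ∩ T₁ = ∅)
    (hsingle₄ : VSeg x₄ a₄ b₄ ∩ T₁ = ∅)
    (hgenA : (x₁, a₁) ∉ frontier T₂) (hgenB : (x₁, b₁) ∉ frontier T₂)
    (htrans : (frontier T₁ ∩ frontier T₂).Finite) :
    (frontier T₁ ∩ frontier T₂).encard ≤ 4 := by
  subst hT₁ hT₂
  have hD₁ : (0:ℝ) < x₂ - x₁ := by linarith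
  have hD₂ : (0:ℝ) < x₄ - x₃ := by linarith
  have hmem₂ : ∀ q : ℝ × ℝ, q ∈ VSeg x₂ a₂ b₂ → q ∈ Tub x₃ x₄ a₃ b₃ a₄ b₄ → False :=
    fun q hq1 hq2 => Set.eq_empty_iff_forall_notMem.mp hsingle₂ q ⟨hq1, hq2⟩
  have hmem₃ : ∀ q : ℝ × ℝ, q ∈ VSeg x₃ a₃ b₃ → q ∈ Tub x₁ x₂ a₁ b₁ a₂ b₂ → False :=
    fun q hq1 hq2 => Set.eq_empty_iff_forall_notMem.mp hsingle₃ q ⟨hq1, hq2⟩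
  have hmem₄ : ∀ q : ℝ × ℝ, q ∈ VSeg x₄ a₄ b₄ → q ∈ Tub x₁ x₂ a₁ b₁ a₂ b₂ → False :=
    fun q hq1 hq2 => Set.eq_empty_iff_forall_notMem.mp hsingle₄ q ⟨hq1, hq2⟩
  -- entry data
  obtain ⟨p₀, hp₀V, hp₀T⟩ := hsingle₁
  rw [mem_VSeg] at hp₀V
  obtain ⟨hp₀x, hp₀a, hp₀b⟩ := hp₀V
  obtain ⟨he1, he2, he3, he4⟩ := hp₀T
  rw [hp₀x] at he1 he2 he3 he4
  have hIT₁ : ∀ y : ℝ, a₁ ≤ y → y ≤ b₁ → ((x₁:ℝ), y) ∈ Tub x₁ x₂ a₁ b₁ a₂ b₂ := by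
    intro y hy1 hy2
    refine ⟨le_refl _, hx₁₂.le, ?_, ?_⟩
    · show (x₂ - x₁) * a₁ + (x₁ - x₁) * a₂ ≤ (x₂ - x₁) * y
      linarith [mul_le_mul_of_nonneg_left hy1 hD₁.le]
    · show (x₂ - x₁) * y ≤ (x₂ - x₁) * b₁ + (x₁ - x₁) * b₂
      linarith [mul_le_mul_of_nonneg_left hy2 hD₁.le]
  have hx31 : x₃ < x₁ := by
    rcases eq_or_lt_of_le he1 with h | h
    · exfalso
      apply hmem₃ (x₁, p₀.2)
      · rw [mem_VSeg]
        subst h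
        refine ⟨rfl, mul_cancel_le hD₂ (by linarith), mul_cancel_le hD₂ (by linarith)⟩
      · exact hIT₁ p₀.2 hp₀a hp₀b
    · exact h
  have hx14 : x₁ < x₄ := by
    rcases eq_or_lt_of_le he2 with h | h
    · exfalso
      apply hmem₄ (x₁, p₀.2)
      · rw [mem_VSeg]
        have h' := h.symm
        subst h'
        refine ⟨rfl, mul_cancel_le hD₂ (by linarith), mul_cancel_le hD₂ (by linarith)⟩
      · exact hIT₁ p₀.2 hp₀a hp₀b
    · exact h
  -- entry bounds
  have entry1 : (x₄ - x₁) * a₃ + (x₁ - x₃) * a₄ ≤ (x₄ - x₃) * b₁ := by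
    linarith [mul_nonneg hD₂.le (by linarith : (0:ℝ) ≤ b₁ - p₀.2)]
  have entry2 : (x₄ - x₃) * a₁ ≤ (x₄ - x₁) * b₃ + (x₁ - x₃) * b₄ := by
    linarith [mul_nonneg hD₂.le (by linarith : (0:ℝ) ≤ p₀.2 - a₁)]
  have hLU : (x₄ - x₁) * a₃ + (x₁ - x₃) * a₄ ≤ (x₄ - x₁) * b₃ + (x₁ - x₃) * b₄ := by
    linarith [mul_nonneg (by linarith : (0:ℝ) ≤ x₄ - x₁) (by linarith : (0:ℝ) ≤ b₃ - a₃),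
      mul_nonneg (by linarith : (0:ℝ) ≤ x₁ - x₃) (by linarith : (0:ℝ) ≤ b₄ - a₄)]
  have entry1s : (x₄ - x₁) * a₃ + (x₁ - x₃) * a₄ < (x₄ - x₃) * b₁ := by
    rcases eq_or_lt_of_le entry1 with h | h
    · exfalso
      apply hgenB
      apply frontier_of_low hx₃₄
      · exact ⟨by linarith, by linarith, by exact h.le, by
          show (x₄ - x₃) * b₁ ≤ (x₄ - (x₁, b₁).1) * b₃ + ((x₁, b₁).1 - x₃) * b₄
          simp only
          linarith⟩
      · show (x₄ - x₃) * b₁ = (x₄ - (x₁, b₁).1) * a₃ + ((x₁, b₁).1 - x₃) * a₄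
        simp only
        linarith
    · exact h
  have entry2s : (x₄ - x₃) * a₁ < (x₄ - x₁) * b₃ + (x₁ - x₃) * b₄ := by
    rcases eq_or_lt_of_le entry2 with h | h
    · exfalso
      apply hgenA
      apply frontier_of_up hx₃₄
      · exact ⟨by linarith, by linarith, by
          show (x₄ - (x₁, a₁).1) * a₃ + ((x₁, a₁).1 - x₃) * a₄ ≤ (x₄ - x₃) * a₁
          simp only
          linarith, by exact h.le⟩
      · show (x₄ - x₃) * a₁ = (x₄ - (x₁, a₁).1) * b₃ + ((x₁, a₁).1 - x₃) * b₄
        simp only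
        linarith
    · exact h
  have hne_bu : (x₄ - x₃) * b₁ ≠ (x₄ - x₁) * b₃ + (x₁ - x₃) * b₄ := by
    intro h
    apply hgenB
    apply frontier_of_up hx₃₄
    · exact ⟨by linarith, by linarith, by
        show (x₄ - (x₁, b₁).1) * a₃ + ((x₁, b₁).1 - x₃) * a₄ ≤ (x₄ - x₃) * b₁
        simp only
        linarith, by exact h.le⟩
    · show (x₄ - x₃) * b₁ = (x₄ - (x₁, b₁).1) * b₃ + ((x₁, b₁).1 - x₃) * b₄
      simp only
      linarith
  have hne_al : (x₄ - x₃) * a₁ ≠ (x₄ - x₁) * a₃ + (x₁ - x₃) * a₄ := by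
    intro h
    apply hgenA
    apply frontier_of_low hx₃₄
    · exact ⟨by linarith, by linarith, by exact h.ge, by
        show (x₄ - x₃) * a₁ ≤ (x₄ - (x₁, a₁).1) * b₃ + ((x₁, a₁).1 - x₃) * b₄
        simp only
        linarith⟩
    · show (x₄ - x₃) * a₁ = (x₄ - (x₁, a₁).1) * a₃ + ((x₁, a₁).1 - x₃) * a₄
      simp only
      linarith
  -- the exit coordinate
  set m : ℝ := min x₂ x₄ with hmdef
  have hm2 : m ≤ x₂ := by rw [hmdef]; exact min_le_left _ _
  have hm4 : m ≤ x₄ := by rw [hmdef]; exact min_le_right _ _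
  have hx1m : x₁ < m := by rw [hmdef]; exact lt_min hx₁₂ hx14
  have hx3m : x₃ < m := lt_trans hx31 hx1m
  -- the exit separation fact
  have hexit : (x₂ - x₁) * ((x₄ - m) * b₃ + (m - x₃) * b₄) < (x₄ - x₃) * ((x₂ - m) * a₁ + (m - x₁) * a₂)
      ∨ (x₄ - x₃) * ((x₂ - m) * b₁ + (m - x₁) * b₂) < (x₂ - x₁) * ((x₄ - m) * a₃ + (m - x₃) * a₄) := by
    by_contra hcon
    push_neg at hcon
    obtain ⟨hc1, hc2⟩ := hcon
    obtain ⟨y, hylow₁, hylow₂, hyup₁, hyup₂⟩ :=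
      exit_choice hD₁ hD₂ h₁ h₂ h₃ h₄ hm2 hm4 hx1m.le hx3m.le hc1 hc2
    have hyT₁ : ((m:ℝ), y) ∈ Tub x₁ x₂ a₁ b₁ a₂ b₂ := ⟨hx1m.le, hm2, hylow₁, hyup₁⟩
    have hyT₂ : ((m:ℝ), y) ∈ Tub x₃ x₄ a₃ b₃ a₄ b₄ := ⟨hx3m.le, hm4, hylow₂, hyup₂⟩
    rcases le_total x₂ x₄ with h | h
    · have hm : m = x₂ := by rw [hmdef]; exact min_eq_left h
      apply hmem₂ (m, y) _ hyT₂
      rw [mem_VSeg]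
      refine ⟨hm, ?_, ?_⟩
      · have h' := hylow₁; rw [hm] at h'
        exact mul_cancel_le hD₁ (by linarith)
      · have h' := hyup₁; rw [hm] at h'
        exact mul_cancel_le hD₁ (by linarith)
    · have hm : m = x₄ := by rw [hmdef]; exact min_eq_right h
      apply hmem₄ (m, y) _ hyT₁
      rw [mem_VSeg]
      refine ⟨hm, ?_, ?_⟩
      · have h' := hylow₂; rw [hm] at h'
        exact mul_cancel_le hD₂ (by linarith)
      · have h' := hyup₂; rw [hm] at h'
        exact mul_cancel_le hD₂ (by linarith)
  -- the six candidate intersection sets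
  set Q1 : Set (ℝ × ℝ) := Tub x₁ x₂ a₁ b₁ a₂ b₂ ∩ Tub x₃ x₄ a₃ b₃ a₄ b₄ ∩ {p | p.1 = x₁} ∩
    {p | (x₄ - x₃) * p.2 = (x₄ - p.1) * a₃ + (p.1 - x₃) * a₄} with hQ1def
  set Q2 : Set (ℝ × ℝ) := Tub x₁ x₂ a₁ b₁ a₂ b₂ ∩ Tub x₃ x₄ a₃ b₃ a₄ b₄ ∩ {p | p.1 = x₁} ∩
    {p | (x₄ - x₃) * p.2 = (x₄ - p.1) * b₃ + (p.1 - x₃) * b₄} with hQ2def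
  set Q3 : Set (ℝ × ℝ) := Tub x₁ x₂ a₁ b₁ a₂ b₂ ∩ Tub x₃ x₄ a₃ b₃ a₄ b₄ ∩
    {p | (x₂ - x₁) * p.2 = (x₂ - p.1) * a₁ + (p.1 - x₁) * a₂} ∩
    {p | (x₄ - x₃) * p.2 = (x₄ - p.1) * a₃ + (p.1 - x₃) * a₄} with hQ3def
  set Q4 : Set (ℝ × ℝ) := Tub x₁ x₂ a₁ b₁ a₂ b₂ ∩ Tub x₃ x₄ a₃ b₃ a₄ b₄ ∩
    {p | (x₂ - x₁) * p.2 = (x₂ - p.1) * a₁ + (p.1 - x₁) * a₂} ∩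
    {p | (x₄ - x₃) * p.2 = (x₄ - p.1) * b₃ + (p.1 - x₃) * b₄} with hQ4def
  set Q5 : Set (ℝ × ℝ) := Tub x₁ x₂ a₁ b₁ a₂ b₂ ∩ Tub x₃ x₄ a₃ b₃ a₄ b₄ ∩
    {p | (x₂ - x₁) * p.2 = (x₂ - p.1) * b₁ + (p.1 - x₁) * b₂} ∩
    {p | (x₄ - x₃) * p.2 = (x₄ - p.1) * a₃ + (p.1 - x₃) * a₄} with hQ5def
  set Q6 : Set (ℝ × ℝ) := Tub x₁ x₂ a₁ b₁ a₂ b₂ ∩ Tub x₃ x₄ a₃ b₃ a₄ b₄ ∩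
    {p | (x₂ - x₁) * p.2 = (x₂ - p.1) * b₁ + (p.1 - x₁) * b₂} ∩
    {p | (x₄ - x₃) * p.2 = (x₄ - p.1) * b₃ + (p.1 - x₃) * b₄} with hQ6def
  -- each is contained in the double frontier
  have hsub1 : Q1 ⊆ frontier (Tub x₁ x₂ a₁ b₁ a₂ b₂) ∩ frontier (Tub x₃ x₄ a₃ b₃ a₄ b₄) := by
    rw [hQ1def]; rintro p ⟨⟨⟨hpT1, hpT2⟩, hc1⟩, hc2⟩
    exact ⟨frontier_of_left hpT1 hc1, frontier_of_low hx₃₄ hpT2 hc2⟩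
  have hsub2 : Q2 ⊆ frontier (Tub x₁ x₂ a₁ b₁ a₂ b₂) ∩ frontier (Tub x₃ x₄ a₃ b₃ a₄ b₄) := by
    rw [hQ2def]; rintro p ⟨⟨⟨hpT1, hpT2⟩, hc1⟩, hc2⟩
    exact ⟨frontier_of_left hpT1 hc1, frontier_of_up hx₃₄ hpT2 hc2⟩
  have hsub3 : Q3 ⊆ frontier (Tub x₁ x₂ a₁ b₁ a₂ b₂) ∩ frontier (Tub x₃ x₄ a₃ b₃ a₄ b₄) := by
    rw [hQ3def]; rintro p ⟨⟨⟨hpT1, hpT2⟩, hc1⟩, hc2⟩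
    exact ⟨frontier_of_low hx₁₂ hpT1 hc1, frontier_of_low hx₃₄ hpT2 hc2⟩
  have hsub4 : Q4 ⊆ frontier (Tub x₁ x₂ a₁ b₁ a₂ b₂) ∩ frontier (Tub x₃ x₄ a₃ b₃ a₄ b₄) := by
    rw [hQ4def]; rintro p ⟨⟨⟨hpT1, hpT2⟩, hc1⟩, hc2⟩
    exact ⟨frontier_of_low hx₁₂ hpT1 hc1, frontier_of_up hx₃₄ hpT2 hc2⟩
  have hsub5 : Q5 ⊆ frontier (Tub x₁ x₂ a₁ b₁ a₂ b₂) ∩ frontier (Tub x₃ x₄ a₃ b₃ a₄ b₄) := by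
    rw [hQ5def]; rintro p ⟨⟨⟨hpT1, hpT2⟩, hc1⟩, hc2⟩
    exact ⟨frontier_of_up hx₁₂ hpT1 hc1, frontier_of_low hx₃₄ hpT2 hc2⟩
  have hsub6 : Q6 ⊆ frontier (Tub x₁ x₂ a₁ b₁ a₂ b₂) ∩ frontier (Tub x₃ x₄ a₃ b₃ a₄ b₄) := by
    rw [hQ6def]; rintro p ⟨⟨⟨hpT1, hpT2⟩, hc1⟩, hc2⟩
    exact ⟨frontier_of_up hx₁₂ hpT1 hc1, frontier_of_up hx₃₄ hpT2 hc2⟩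
  -- each has at most one point
  have hTT : Convex ℝ (Tub x₁ x₂ a₁ b₁ a₂ b₂ ∩ Tub x₃ x₄ a₃ b₃ a₄ b₄) :=
    (Tub_convex _ _ _ _ _ _).inter (Tub_convex _ _ _ _ _ _)
  have e1 : Q1.encard ≤ 1 := enc_le_one hsub1 htrans (by
    rw [hQ1def]; exact ((hTT.inter (vert_convex x₁)).inter (graph_convex x₃ x₄ a₃ a₄)))
  have e2 : Q2.encard ≤ 1 := enc_le_one hsub2 htrans (by
    rw [hQ2def]; exact ((hTT.inter (vert_convex x₁)).inter (graph_convex x₃ x₄ b₃ b₄)))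
  have e3 : Q3.encard ≤ 1 := enc_le_one hsub3 htrans (by
    rw [hQ3def]; exact ((hTT.inter (graph_convex x₁ x₂ a₁ a₂)).inter (graph_convex x₃ x₄ a₃ a₄)))
  have e4 : Q4.encard ≤ 1 := enc_le_one hsub4 htrans (by
    rw [hQ4def]; exact ((hTT.inter (graph_convex x₁ x₂ a₁ a₂)).inter (graph_convex x₃ x₄ b₃ b₄)))
  have e5 : Q5.encard ≤ 1 := enc_le_one hsub5 htrans (by
    rw [hQ5def]; exact ((hTT.inter (graph_convex x₁ x₂ b₁ b₂)).inter (graph_convex x₃ x₄ a₃ a₄)))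
  have e6 : Q6.encard ≤ 1 := enc_le_one hsub6 htrans (by
    rw [hQ6def]; exact ((hTT.inter (graph_convex x₁ x₂ b₁ b₂)).inter (graph_convex x₃ x₄ b₃ b₄)))
  -- the double frontier is covered by the six sets
  have cover : frontier (Tub x₁ x₂ a₁ b₁ a₂ b₂) ∩ frontier (Tub x₃ x₄ a₃ b₃ a₄ b₄) ⊆
      Q1 ∪ Q2 ∪ Q3 ∪ Q4 ∪ Q5 ∪ Q6 := by
    rintro p ⟨hf1, hf2⟩
    obtain ⟨hpT1, hd1⟩ := frontier_sub hf1
    obtain ⟨hpT2, hd2⟩ := frontier_sub hf2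
    have hd1' : p.1 = x₁ ∨ (x₂ - x₁) * p.2 = (x₂ - p.1) * a₁ + (p.1 - x₁) * a₂ ∨
        (x₂ - x₁) * p.2 = (x₂ - p.1) * b₁ + (p.1 - x₁) * b₂ := by
      rcases hd1 with h | h | h | h
      · exact Or.inl h
      · exfalso
        apply hmem₂ p _ hpT2
        rw [mem_VSeg]
        obtain ⟨g1, g2, g3, g4⟩ := hpT1
        rw [h] at g3 g4
        exact ⟨h, mul_cancel_le hD₁ (by linarith), mul_cancel_le hD₁ (by linarith)⟩
      · exact Or.inr (Or.inl h)
      · exact Or.inr (Or.inr h)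
    have hd2' : (x₄ - x₃) * p.2 = (x₄ - p.1) * a₃ + (p.1 - x₃) * a₄ ∨
        (x₄ - x₃) * p.2 = (x₄ - p.1) * b₃ + (p.1 - x₃) * b₄ := by
      rcases hd2 with h | h | h | h
      · exfalso
        apply hmem₃ p _ hpT1
        rw [mem_VSeg]
        obtain ⟨g1, g2, g3, g4⟩ := hpT2
        rw [h] at g3 g4
        exact ⟨h, mul_cancel_le hD₂ (by linarith), mul_cancel_le hD₂ (by linarith)⟩
      · exfalso
        apply hmem₄ p _ hpT1
        rw [mem_VSeg]
        obtain ⟨g1, g2, g3, g4⟩ := hpT2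
        rw [h] at g3 g4
        exact ⟨h, mul_cancel_le hD₂ (by linarith), mul_cancel_le hD₂ (by linarith)⟩
      · exact Or.inl h
      · exact Or.inr h
    simp only [Set.mem_union]
    rcases hd1' with h1 | h1 | h1 <;> rcases hd2' with h2 | h2
    · exact Or.inl (Or.inl (Or.inl (Or.inl (Or.inl (by rw [hQ1def]; exact ⟨⟨⟨hpT1, hpT2⟩, h1⟩, h2⟩)))))
    · exact Or.inl (Or.inl (Or.inl (Or.inl (Or.inr (by rw [hQ2def]; exact ⟨⟨⟨hpT1, hpT2⟩, h1⟩, h2⟩)))))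
    · exact Or.inl (Or.inl (Or.inl (Or.inr (by rw [hQ3def]; exact ⟨⟨⟨hpT1, hpT2⟩, h1⟩, h2⟩))))
    · exact Or.inl (Or.inl (Or.inr (by rw [hQ4def]; exact ⟨⟨⟨hpT1, hpT2⟩, h1⟩, h2⟩)))
    · exact Or.inl (Or.inr (by rw [hQ5def]; exact ⟨⟨⟨hpT1, hpT2⟩, h1⟩, h2⟩))
    · exact Or.inr (by rw [hQ6def]; exact ⟨⟨⟨hpT1, hpT2⟩, h1⟩, h2⟩)
  rcases hexit with hab | hbe
  · -- exit above: Q5 is empty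
    have hQ5 : Q5 = ∅ := by
      rw [hQ5def, Set.eq_empty_iff_forall_notMem]
      rintro p ⟨⟨⟨hpT1, hpT2⟩, hc1⟩, hc2⟩
      simp only [Set.mem_setOf_eq] at hc1 hc2
      obtain ⟨g1, g2, g3, g4⟩ := hpT1
      obtain ⟨k1, k2, k3, k4⟩ := hpT2
      have hpm : p.1 ≤ m := by rw [hmdef]; exact le_min g2 k2
      refine seg_no_cross hx1m g1 hpm
        (show (0:ℝ) < (x₂ - x₁) * ((x₄ - x₃) * b₁ - ((x₄ - x₁) * a₃ + (x₁ - x₃) * a₄)) from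
          mul_pos hD₁ (by linarith))
        (show (0:ℝ) < (x₄ - x₃) * ((x₂ - m) * b₁ + (m - x₁) * b₂) -
            (x₂ - x₁) * ((x₄ - m) * a₃ + (m - x₃) * a₄) from by
          linarith [mul_nonneg (mul_nonneg hD₂.le (by linarith : (0:ℝ) ≤ x₂ - m)) (by linarith : (0:ℝ) ≤ b₁ - a₁),
            mul_nonneg (mul_nonneg hD₂.le (by linarith : (0:ℝ) ≤ m - x₁)) (by linarith : (0:ℝ) ≤ b₂ - a₂),
            mul_nonneg (mul_nonneg hD₁.le (by linarith : (0:ℝ) ≤ x₄ - m)) (by linarith : (0:ℝ) ≤ b₃ - a₃),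
            mul_nonneg (mul_nonneg hD₁.le (by linarith : (0:ℝ) ≤ m - x₃)) (by linarith : (0:ℝ) ≤ b₄ - a₄)])
        (show (x₄ - x₃) * ((x₂ - p.1) * b₁ + (p.1 - x₁) * b₂) -
            (x₂ - x₁) * ((x₄ - p.1) * a₃ + (p.1 - x₃) * a₄) = 0 from by
          linear_combination (x₂ - x₁) * hc2 - (x₄ - x₃) * hc1)
        (by ring)
    rcases hne_bu.lt_or_gt with hbu | hbu
    · -- top endpoint of I₁ inside T₂: Q2 empty
      have hQ2 : Q2 = ∅ := by
        rw [hQ2def, Set.eq_empty_iff_forall_notMem]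
        rintro p ⟨⟨⟨hpT1, hpT2⟩, hc1⟩, hc2⟩
        simp only [Set.mem_setOf_eq] at hc1 hc2
        obtain ⟨g1, g2, g3, g4⟩ := hpT1
        rw [hc1] at g4 hc2
        have hpb : p.2 ≤ b₁ := mul_cancel_le hD₁ (by linarith)
        linarith [hc2, mul_le_mul_of_nonneg_left hpb hD₂.le]
      have cover' := cover
      rw [hQ5, hQ2] at cover'
      simp only [Set.union_empty, Set.empty_union] at cover'
      exact final_count cover' e1 e3 e4 e6
    · -- top endpoint of I₁ above T₂: Q6 empty
      have hQ6 : Q6 = ∅ := by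
        rw [hQ6def, Set.eq_empty_iff_forall_notMem]
        rintro p ⟨⟨⟨hpT1, hpT2⟩, hc1⟩, hc2⟩
        simp only [Set.mem_setOf_eq] at hc1 hc2
        obtain ⟨g1, g2, g3, g4⟩ := hpT1
        obtain ⟨k1, k2, k3, k4⟩ := hpT2
        have hpm : p.1 ≤ m := by rw [hmdef]; exact le_min g2 k2
        refine seg_no_cross hx1m g1 hpm
          (show (0:ℝ) < (x₂ - x₁) * ((x₄ - x₃) * b₁ - ((x₄ - x₁) * b₃ + (x₁ - x₃) * b₄)) from
            mul_pos hD₁ (by linarith))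
          (show (0:ℝ) < (x₄ - x₃) * ((x₂ - m) * b₁ + (m - x₁) * b₂) -
              (x₂ - x₁) * ((x₄ - m) * b₃ + (m - x₃) * b₄) from by
            linarith [mul_nonneg (mul_nonneg hD₂.le (by linarith : (0:ℝ) ≤ x₂ - m)) (by linarith : (0:ℝ) ≤ b₁ - a₁),
              mul_nonneg (mul_nonneg hD₂.le (by linarith : (0:ℝ) ≤ m - x₁)) (by linarith : (0:ℝ) ≤ b₂ - a₂)])
          (show (x₄ - x₃) * ((x₂ - p.1) * b₁ + (p.1 - x₁) * b₂) -
              (x₂ - x₁) * ((x₄ - p.1) * b₃ + (p.1 - x₃) * b₄) = 0 from by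
            linear_combination (x₂ - x₁) * hc2 - (x₄ - x₃) * hc1)
          (by ring)
      have cover' := cover
      rw [hQ5, hQ6] at cover'
      simp only [Set.union_empty, Set.empty_union] at cover'
      exact final_count cover' e1 e2 e3 e4
  · -- exit below: Q4 is empty
    have hQ4 : Q4 = ∅ := by
      rw [hQ4def, Set.eq_empty_iff_forall_notMem]
      rintro p ⟨⟨⟨hpT1, hpT2⟩, hc1⟩, hc2⟩
      simp only [Set.mem_setOf_eq] at hc1 hc2
      obtain ⟨g1, g2, g3, g4⟩ := hpT1
      obtain ⟨k1, k2, k3, k4⟩ := hpT2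
      have hpm : p.1 ≤ m := by rw [hmdef]; exact le_min g2 k2
      refine seg_no_cross hx1m g1 hpm
        (show (0:ℝ) < (x₂ - x₁) * (((x₄ - x₁) * b₃ + (x₁ - x₃) * b₄) - (x₄ - x₃) * a₁) from
          mul_pos hD₁ (by linarith))
        (show (0:ℝ) < (x₂ - x₁) * ((x₄ - m) * b₃ + (m - x₃) * b₄) -
            (x₄ - x₃) * ((x₂ - m) * a₁ + (m - x₁) * a₂) from by
          linarith [mul_nonneg (mul_nonneg hD₂.le (by linarith : (0:ℝ) ≤ x₂ - m)) (by linarith : (0:ℝ) ≤ b₁ - a₁),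
            mul_nonneg (mul_nonneg hD₂.le (by linarith : (0:ℝ) ≤ m - x₁)) (by linarith : (0:ℝ) ≤ b₂ - a₂),
            mul_nonneg (mul_nonneg hD₁.le (by linarith : (0:ℝ) ≤ x₄ - m)) (by linarith : (0:ℝ) ≤ b₃ - a₃),
            mul_nonneg (mul_nonneg hD₁.le (by linarith : (0:ℝ) ≤ m - x₃)) (by linarith : (0:ℝ) ≤ b₄ - a₄)])
        (show (x₂ - x₁) * ((x₄ - p.1) * b₃ + (p.1 - x₃) * b₄) -
            (x₄ - x₃) * ((x₂ - p.1) * a₁ + (p.1 - x₁) * a₂) = 0 from by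
          linear_combination (x₄ - x₃) * hc1 - (x₂ - x₁) * hc2)
        (by ring)
    rcases hne_al.lt_or_gt with hal | hal
    · -- bottom endpoint of I₁ below T₂: Q3 empty
      have hQ3 : Q3 = ∅ := by
        rw [hQ3def, Set.eq_empty_iff_forall_notMem]
        rintro p ⟨⟨⟨hpT1, hpT2⟩, hc1⟩, hc2⟩
        simp only [Set.mem_setOf_eq] at hc1 hc2
        obtain ⟨g1, g2, g3, g4⟩ := hpT1
        obtain ⟨k1, k2, k3, k4⟩ := hpT2
        have hpm : p.1 ≤ m := by rw [hmdef]; exact le_min g2 k2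
        refine seg_no_cross hx1m g1 hpm
          (show (0:ℝ) < (x₂ - x₁) * (((x₄ - x₁) * a₃ + (x₁ - x₃) * a₄) - (x₄ - x₃) * a₁) from
            mul_pos hD₁ (by linarith))
          (show (0:ℝ) < (x₂ - x₁) * ((x₄ - m) * a₃ + (m - x₃) * a₄) -
              (x₄ - x₃) * ((x₂ - m) * a₁ + (m - x₁) * a₂) from by
            linarith [mul_nonneg (mul_nonneg hD₂.le (by linarith : (0:ℝ) ≤ x₂ - m)) (by linarith : (0:ℝ) ≤ b₁ - a₁),
              mul_nonneg (mul_nonneg hD₂.le (by linarith : (0:ℝ) ≤ m - x₁)) (by linarith : (0:ℝ) ≤ b₂ - a₂)])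
          (show (x₂ - x₁) * ((x₄ - p.1) * a₃ + (p.1 - x₃) * a₄) -
              (x₄ - x₃) * ((x₂ - p.1) * a₁ + (p.1 - x₁) * a₂) = 0 from by
            linear_combination (x₄ - x₃) * hc1 - (x₂ - x₁) * hc2)
          (by ring)
      have cover' := cover
      rw [hQ4, hQ3] at cover'
      simp only [Set.union_empty, Set.empty_union] at cover'
      exact final_count cover' e1 e2 e5 e6
    · -- bottom endpoint of I₁ inside T₂: Q1 empty
      have hQ1 : Q1 = ∅ := by
        rw [hQ1def, Set.eq_empty_iff_forall_notMem]
        rintro p ⟨⟨⟨hpT1, hpT2⟩, hc1⟩, hc2⟩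
        simp only [Set.mem_setOf_eq] at hc1 hc2
        obtain ⟨g1, g2, g3, g4⟩ := hpT1
        rw [hc1] at g3 hc2
        have hpa : a₁ ≤ p.2 := mul_cancel_le hD₁ (by linarith)
        linarith [hc2, mul_le_mul_of_nonneg_left hpa hD₂.le]
      have cover' := cover
      rw [hQ4, hQ1] at cover'
      simp only [Set.union_empty, Set.empty_union] at cover'
      exact final_count cover' e2 e3 e5 e6

/-- Reflection in the y-axis. -/
def refl2 : ℝ × ℝ → ℝ × ℝ := fun p => (-p.1, p.2)

lemma refl2_inj : Function.Injective refl2 := by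
  intro a b h
  rw [Prod.ext_iff] at h ⊢
  obtain ⟨h1, h2⟩ := h
  exact ⟨neg_inj.mp h1, h2⟩

lemma refl2_homeo : refl2 = ⇑((Homeomorph.neg ℝ).prodCongr (Homeomorph.refl ℝ)) := by
  funext p
  rfl

lemma refl2_frontier (A : Set (ℝ × ℝ)) : frontier (refl2 '' A) = refl2 '' frontier A := by
  rw [refl2_homeo, Homeomorph.image_frontier]

lemma refl2_VSeg (x a b : ℝ) : refl2 '' VSeg x a b = VSeg (-x) a b := by
  ext q
  constructor
  · rintro ⟨r, hr, rfl⟩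
    rw [mem_VSeg] at hr ⊢
    exact ⟨by show -r.1 = -x; rw [hr.1], hr.2.1, hr.2.2⟩
  · intro hq
    rw [mem_VSeg] at hq
    refine ⟨(-q.1, q.2), ?_, ?_⟩
    · rw [mem_VSeg]
      exact ⟨by show -q.1 = x; rw [hq.1]; ring, hq.2.1, hq.2.2⟩
    · show (- -q.1, q.2) = q
      rw [neg_neg]

lemma refl2_linear : refl2 = ⇑((LinearMap.prod (-(LinearMap.fst ℝ ℝ ℝ))
    (LinearMap.snd ℝ ℝ ℝ)).toAffineMap) := by
  funext p
  rfl

lemma refl2_hull (s t α β γ δ : ℝ) :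
    refl2 '' convexHull ℝ (VSeg s α β ∪ VSeg t γ δ) =
      convexHull ℝ (VSeg (-s) α β ∪ VSeg (-t) γ δ) := by
  rw [refl2_linear, AffineMap.image_convexHull, Set.image_union, ← refl2_linear,
    refl2_VSeg, refl2_VSeg]

lemma main_sorted (x₁ a₁ b₁ x₂ a₂ b₂ x₃ a₃ b₃ x₄ a₄ b₄ : ℝ)
    (hx₁₂ : x₁ < x₂) (hx₃₄ : x₃ ≠ x₄)
    (h₁ : a₁ ≤ b₁) (h₂ : a₂ ≤ b₂) (h₃ : a₃ ≤ b₃) (h₄ : a₄ ≤ b₄)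
    (T₁ T₂ : Set (ℝ × ℝ))
    (hT₁ : T₁ = convexHull ℝ (VSeg x₁ a₁ b₁ ∪ VSeg x₂ a₂ b₂))
    (hT₂ : T₂ = convexHull ℝ (VSeg x₃ a₃ b₃ ∪ VSeg x₄ a₄ b₄))
    (hsingle₁ : (VSeg x₁ a₁ b₁ ∩ T₂).Nonempty)
    (hsingle₂ : VSeg x₂ a₂ b₂ ∩ T₂ = ∅)
    (hsingle₃ : VSeg x₃ a₃ b₃ ∩ T₁ = ∅)
    (hsingle₄ : VSeg x₄ a₄ b₄ ∩ T₁ = ∅)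
    (hgenA : (x₁, a₁) ∉ frontier T₂) (hgenB : (x₁, b₁) ∉ frontier T₂)
    (htrans : (frontier T₁ ∩ frontier T₂).Finite) :
    (frontier T₁ ∩ frontier T₂).encard ≤ 4 := by
  rcases hx₃₄.lt_or_gt with h34 | h34
  · exact core_count x₁ a₁ b₁ x₂ a₂ b₂ x₃ a₃ b₃ x₄ a₄ b₄ hx₁₂ h34 h₁ h₂ h₃ h₄ T₁ T₂
      (by rw [hT₁, hull_eq hx₁₂ h₁ h₂ (Tub_convex _ _ _ _ _ _)])
      (by rw [hT₂, hull_eq h34 h₃ h₄ (Tub_convex _ _ _ _ _ _)])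
      hsingle₁ hsingle₂ hsingle₃ hsingle₄ hgenA hgenB htrans
  · exact core_count x₁ a₁ b₁ x₂ a₂ b₂ x₄ a₄ b₄ x₃ a₃ b₃ hx₁₂ h34 h₁ h₂ h₄ h₃ T₁ T₂
      (by rw [hT₁, hull_eq hx₁₂ h₁ h₂ (Tub_convex _ _ _ _ _ _)])
      (by rw [hT₂, Set.union_comm, hull_eq h34 h₄ h₃ (Tub_convex _ _ _ _ _ _)])
      hsingle₁ hsingle₂ hsingle₄ hsingle₃ hgenA hgenB htrans


/-- The boundaries of two tubes forming a single intersection meet in at most four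
points. `T₁` is the tube of the vertical segments `I₁, I₂`; `T₂` of `J₁, J₂`;
exactly one defining segment of `T₁` (say `I₁`) meets `T₂`, and no defining segment
of `T₂` meets `T₁`. General position: no segment endpoint lies on the boundary of the
other tube, and the boundaries cross transversally (in particular their intersection
is finite). -/
theorem singleIntersection_boundaries_meet_in_at_most_four_points
    (x₁ a₁ b₁ x₂ a₂ b₂ x₃ a₃ b₃ x₄ a₄ b₄ : ℝ)
    (hx₁₂ : x₁ ≠ x₂) (hx₃₄ : x₃ ≠ x₄)
    (h₁ : a₁ ≤ b₁) (h₂ : a₂ ≤ b₂) (h₃ : a₃ ≤ b₃) (h₄ : a₄ ≤ b₄)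
    (T₁ T₂ : Set (ℝ × ℝ))
    (hT₁ : T₁ = convexHull ℝ (VSeg x₁ a₁ b₁ ∪ VSeg x₂ a₂ b₂))
    (hT₂ : T₂ = convexHull ℝ (VSeg x₃ a₃ b₃ ∪ VSeg x₄ a₄ b₄))
    -- single intersection: exactly one defining segment of T₁ meets T₂,
    -- and no defining segment of T₂ meets T₁:
    (hsingle₁ : (VSeg x₁ a₁ b₁ ∩ T₂).Nonempty)
    (hsingle₂ : VSeg x₂ a₂ b₂ ∩ T₂ = ∅)
    (hsingle₃ : VSeg x₃ a₃ b₃ ∩ T₁ = ∅)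
    (hsingle₄ : VSeg x₄ a₄ b₄ ∩ T₁ = ∅)
    -- general position: no segment endpoint on the other tube's boundary:
    (hgen₁ : ∀ e ∈ ({(x₁, a₁), (x₁, b₁), (x₂, a₂), (x₂, b₂)} : Set (ℝ × ℝ)),
      e ∉ frontier T₂)
    (hgen₂ : ∀ e ∈ ({(x₃, a₃), (x₃, b₃), (x₄, a₄), (x₄, b₄)} : Set (ℝ × ℝ)),
      e ∉ frontier T₁)
    -- transversality: the boundary intersection is finite:
    (htrans : (frontier T₁ ∩ frontier T₂).Finite) :
    (frontier T₁ ∩ frontier T₂).encard ≤ 4 := by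
  have hgenA : (x₁, a₁) ∉ frontier T₂ := hgen₁ _ (by simp)
  have hgenB : (x₁, b₁) ∉ frontier T₂ := hgen₁ _ (by simp)
  rcases hx₁₂.lt_or_gt with h12 | h12
  · exact main_sorted x₁ a₁ b₁ x₂ a₂ b₂ x₃ a₃ b₃ x₄ a₄ b₄ h12 hx₃₄ h₁ h₂ h₃ h₄ T₁ T₂
      hT₁ hT₂ hsingle₁ hsingle₂ hsingle₃ hsingle₄ hgenA hgenB htrans
  · -- reflect through the y-axis
    have hT₁R : refl2 '' T₁ = convexHull ℝ (VSeg (-x₁) a₁ b₁ ∪ VSeg (-x₂) a₂ b₂) := by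
      rw [hT₁, refl2_hull]
    have hT₂R : refl2 '' T₂ = convexHull ℝ (VSeg (-x₃) a₃ b₃ ∪ VSeg (-x₄) a₄ b₄) := by
      rw [hT₂, refl2_hull]
    have key := main_sorted (-x₁) a₁ b₁ (-x₂) a₂ b₂ (-x₃) a₃ b₃ (-x₄) a₄ b₄
      (by linarith) (fun h => hx₃₄ (by linarith [neg_inj.mp h]))
      h₁ h₂ h₃ h₄ (refl2 '' T₁) (refl2 '' T₂) hT₁R hT₂R
      (by rw [← refl2_VSeg, ← Set.image_inter refl2_inj]; exact hsingle₁.image refl2)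
      (by rw [← refl2_VSeg, ← Set.image_inter refl2_inj, hsingle₂, Set.image_empty])
      (by rw [← refl2_VSeg, ← Set.image_inter refl2_inj, hsingle₃, Set.image_empty])
      (by rw [← refl2_VSeg, ← Set.image_inter refl2_inj, hsingle₄, Set.image_empty])
      (by
        rw [refl2_frontier]
        rintro ⟨q, hq, hqe⟩
        have : q = (x₁, a₁) := refl2_inj (hqe.trans (show ((-x₁ : ℝ), a₁) = refl2 (x₁, a₁) from rfl))
        exact hgenA (this ▸ hq))
      (by
        rw [refl2_frontier]
        rintro ⟨q, hq, hqe⟩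
        have : q = (x₁, b₁) := refl2_inj (hqe.trans (show ((-x₁ : ℝ), b₁) = refl2 (x₁, b₁) from rfl))
        exact hgenB (this ▸ hq))
      (by
        rw [refl2_frontier, refl2_frontier, ← Set.image_inter refl2_inj]
        exact htrans.image refl2)
    rwa [refl2_frontier, refl2_frontier, ← Set.image_inter refl2_inj,
      refl2_inj.injOn.encard_image] at key
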